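/- Let C be an [n,k]-linear code over F_q with generator matrix G having columns G_0, ..., G_{n-1}. For any subspace D ≤ C with D = {yG : y ∈ D̃} for a subspace D̃ ≤ F_q^k, the pair weight satisfies w_p(D) = n - |{0 ≤ i ≤ n-1 : span(G_i, G_{i+1}) ⊆ D̃^⊥}| (indices mod n). -/

import Mathlib

/-- The pair support of a subspace `D ≤ F^n` (indices mod `n`). -/
def pairSupport {F : Type*} [Field F] {n : ℕ} [NeZero n] (D : Submodule F (Fin n → F)) :
    Set (Fin n) :=
  {i | ∃ x ∈ D, x i ≠ 0 ∨ x (i + 1) ≠ 0}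

/-- The orthogonal complement of a subspace of `F^k` under the standard bilinear form. -/
def perp {F : Type*} [Field F] {k : ℕ} (W : Submodule F (Fin k → F)) :
    Submodule F (Fin k → F) where
  carrier := {x | ∀ v ∈ W, dotProduct x v = 0}
  add_mem' := by
    intro a b ha hb v hv
    simp [add_dotProduct, ha v hv, hb v hv]
  zero_mem' := by
    intro v hv
    simp
  smul_mem' := by
    intro c a ha v hv
    simp [smul_dotProduct, ha v hv]

/-- If `G` is a generator matrix (rank `k`) of `C` and `D = D̃·G`, then
`w_p(D) = n - #{i : span(G_i, G_{i+1}) ⊆ D̃^⊥}`. -/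
theorem pair_weight_eq_n_sub_count {F : Type*} [Field F] {n k : ℕ} [NeZero n]
    (G : Matrix (Fin k) (Fin n) F) (hG : Function.Injective G.vecMulLinear)
    (Dt : Submodule F (Fin k → F)) :
    (pairSupport (Dt.map G.vecMulLinear)).ncard =
      n - Set.ncard {i : Fin n |
        Submodule.span F {G.transpose i, G.transpose (i + 1)} ≤ perp Dt} := by
  classical
  have hkey : ∀ (i : Fin n) (y : Fin k → F), G.vecMulLinear y i = dotProduct (G.transpose i) y := by
    intro i y
    simp [Matrix.vecMulLinear, Matrix.vecMul, dotProduct, Matrix.transpose_apply, mul_comm]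
  have hmem : ∀ (i : Fin n), (G.transpose i ∈ perp Dt) ↔ ∀ y ∈ Dt, G.vecMulLinear y i = 0 := by
    intro i
    constructor
    · intro h y hy; rw [hkey]; exact h y hy
    · intro h v hv; rw [← hkey]; exact h v hv
  have hset : pairSupport (Dt.map G.vecMulLinear) =
      {i : Fin n | Submodule.span F {G.transpose i, G.transpose (i + 1)} ≤ perp Dt}ᶜ := by
    ext i
    simp only [pairSupport, Set.mem_setOf_eq, Set.mem_compl_iff, Submodule.span_le,
      Set.insert_subset_iff, Set.singleton_subset_iff, SetLike.mem_coe]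
    constructor
    · rintro ⟨x, ⟨y, hy, rfl⟩, h⟩ ⟨h1, h2⟩
      rcases h with h | h
      · exact h ((hmem i).1 h1 y hy)
      · exact h ((hmem (i+1)).1 h2 y hy)
    · intro h
      by_cases h1 : G.transpose i ∈ perp Dt
      · have h2 : ¬ (G.transpose (i+1) ∈ perp Dt) := fun h2 => h ⟨h1, h2⟩
        rw [hmem] at h2
        push_neg at h2
        obtain ⟨y, hy, hne⟩ := h2
        exact ⟨G.vecMulLinear y, ⟨y, hy, rfl⟩, Or.inr hne⟩
      · rw [hmem] at h1
        push_neg at h1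
        obtain ⟨y, hy, hne⟩ := h1
        exact ⟨G.vecMulLinear y, ⟨y, hy, rfl⟩, Or.inl hne⟩
  rw [hset]
  have := Set.ncard_add_ncard_compl {i : Fin n | Submodule.span F {G.transpose i, G.transpose (i + 1)} ≤ perp Dt}
  simp [Nat.card_eq_fintype_card] at this
  omega
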